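/- Let $h_1 \le \dots \le h_N$ be reals, $k < N$, and consider the mixing system: $v \ge h_{N-k}$ and $v + (h_i - h_{N-k}) z_i \ge h_i$ for $i > N-k$, with $z \in [0,1]^N$, $v \in \mathbb{R}$. For a chain $N \ge j_1 > \dots > j_\ell \ge N-k+1$ with $j_{\ell+1} := N-k$, the mixing inequality $v + \sum_{m=1}^\ell (h_{j_m} - h_{j_{m+1}}) z_{j_m} \ge h_{j_1}$ holds for every point with $z \in \{0,1\}^N$, but can be violated by points with fractional $z \in [0,1]^N$ satisfying the base system. -/

import Mathlib

lemma mix_aux {N : ℕ} (b : Fin N) (h : Fin N → ℝ) (hmono : Monotone h)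
    (v : ℝ) (z : Fin N → ℝ) (hz0 : ∀ i, 0 ≤ z i) (hzbin : ∀ i, z i = 0 ∨ z i = 1)
    (hbase0 : h b ≤ v)
    (hbase : ∀ i : Fin N, (b : ℕ) < (i : ℕ) → h i ≤ v + (h i - h b) * z i) :
    ∀ ℓ (j : Fin (ℓ + 1) → Fin N),
      (∀ m : Fin ℓ, (j m.succ : ℕ) < (j m.castSucc : ℕ)) →
      j (Fin.last ℓ) = b →
      (b : ℕ) ≤ (j 0 : ℕ) ∧
        h (j 0) ≤ v + ∑ m : Fin ℓ, (h (j m.castSucc) - h (j m.succ)) * z (j m.castSucc) := by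
  intro ℓ
  induction ℓ with
  | zero =>
    intro j hdec hlast
    have h0 : j 0 = b := hlast
    refine ⟨le_of_eq (by rw [h0]), ?_⟩
    simp [h0, hbase0]
  | succ n ih =>
    intro j hdec hlast
    set j' : Fin (n + 1) → Fin N := fun m => j m.succ with hj'
    have hdec' : ∀ m : Fin n, (j' m.succ : ℕ) < (j' m.castSucc : ℕ) := by
      intro m
      have := hdec m.succ
      exact this
    have hlast' : j' (Fin.last n) = b := by
      simpa [hj', Fin.succ_last] using hlast
    obtain ⟨hb1, hih⟩ := ih j' hdec' hlast'
    have h10 : (j' 0 : ℕ) < (j 0 : ℕ) := by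
      have := hdec 0
      simpa [hj'] using this
    refine ⟨by omega, ?_⟩
    have hsum : ∑ m : Fin (n + 1), (h (j m.castSucc) - h (j m.succ)) * z (j m.castSucc)
        = (h (j 0) - h (j' 0)) * z (j 0)
          + ∑ m : Fin n, (h (j' m.castSucc) - h (j' m.succ)) * z (j' m.castSucc) := by
      rw [Fin.sum_univ_succ]
      congr 1
    rw [hsum]
    rcases hzbin (j 0) with hz | hz
    · have hidx : (b : ℕ) < (j 0 : ℕ) := by omega
      have h0 : h (j 0) ≤ v := by
        have := hbase (j 0) hidx
        simpa [hz] using this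
      have htail : 0 ≤ ∑ m : Fin n, (h (j' m.castSucc) - h (j' m.succ)) * z (j' m.castSucc) := by
        apply Finset.sum_nonneg
        intro m _
        apply mul_nonneg _ (hz0 _)
        have : (j' m.succ : ℕ) ≤ (j' m.castSucc : ℕ) := le_of_lt (hdec' m)
        have := hmono (show j' m.succ ≤ j' m.castSucc from this)
        linarith
      rw [hz]
      linarith
    · have hmono0 : h (j' 0) ≤ h (j 0) := hmono (le_of_lt h10)
      rw [hz]
      linarith

/-- Mixing inequalities are valid for binary points of the base mixing system, but can
be strictly violated by fractional points: concretely, for `N = 3`, `k = 2`,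
`h = (0,1,2)`, the fractional point `v = 1/2`, `z₂ = 1/2`, `z₃ = 3/4` satisfies the
base system but violates the mixing inequality for the chain `(3,2)`. -/
theorem stmt17 (N k ℓ : ℕ) (hk : k < N) (h : Fin N → ℝ) (hmono : Monotone h)
    (v : ℝ) (z : Fin N → ℝ) (hz01 : ∀ i, 0 ≤ z i ∧ z i ≤ 1)
    (hzbin : ∀ i, z i = 0 ∨ z i = 1)
    (hbase0 : h ⟨N - k - 1, by omega⟩ ≤ v)
    (hbase : ∀ i : Fin N, N - k < (i : ℕ) + 1 →
      h i ≤ v + (h i - h ⟨N - k - 1, by omega⟩) * z i)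
    (j : Fin (ℓ + 1) → Fin N)
    (hdec : ∀ m : Fin ℓ, (j m.succ : ℕ) < (j m.castSucc : ℕ))
    (hlast : j (Fin.last ℓ) = ⟨N - k - 1, by omega⟩) :
    (h (j 0) ≤ v + ∑ m : Fin ℓ,
        (h (j m.castSucc) - h (j m.succ)) * z (j m.castSucc)) ∧
    (∃ (v' : ℝ) (z' : Fin 3 → ℝ), (∀ i, 0 ≤ z' i ∧ z' i ≤ 1) ∧
      0 ≤ v' ∧ 1 ≤ v' + (1 - 0) * z' 1 ∧ 2 ≤ v' + (2 - 0) * z' 2 ∧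
      v' + (2 - 1) * z' 2 + (1 - 0) * z' 1 < 2) := by
  constructor
  · have := mix_aux ⟨N - k - 1, by omega⟩ h hmono v z (fun i => (hz01 i).1) hzbin hbase0
      (fun i hi => hbase i (by have hi' : N - k - 1 < (i : ℕ) := hi; omega)) ℓ j hdec hlast
    exact this.2
  · refine ⟨1/2, ![0, 1/2, 3/4], ?_, by norm_num, by norm_num, by rw [show (![0, 1/2, 3/4] : Fin 3 → ℝ) 2 = 3/4 from rfl]; norm_num, by rw [show (![0, 1/2, 3/4] : Fin 3 → ℝ) 2 = 3/4 from rfl]; norm_num⟩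
    intro i
    fin_cases i <;> norm_num
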